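/- arXiv:1310.1269 — 2 statements merged into one kernel-verified Lean document; each statement's English description precedes it below -/
import Mathlib

section
/- Let Γ be a connected metric graph of first Betti number b ≥ 2 and total length b. Then there exist b homologically independent loops in Γ all based at the same point, each of length at most 2b. -/
/-- A metric graph: a finite graph (multiple edges and loops allowed) with a
nonnegative length assigned to each edge. -/
structure MGraph where
  V : Type
  E : Type
  fV : Fintype V
  fE : Fintype E
  deV : DecidableEq V
  deE : DecidableEq E
  s : E → V
  t : E → V
  len : E → ℝ
  len_nonneg : ∀ e, 0 ≤ len e

attribute [instance] MGraph.fV MGraph.fE MGraph.deV MGraph.deE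

namespace MGraph

variable (G : MGraph)

/-- The total length (one-dimensional Hausdorff measure) of the metric graph. -/
def totalLength : ℝ := ∑ e, G.len e

/-- A dart is an edge together with an orientation. -/
def dstart (d : G.E × Bool) : G.V := if d.2 then G.s d.1 else G.t d.1

def dend (d : G.E × Bool) : G.V := if d.2 then G.t d.1 else G.s d.1

/-- `G.IsWalk u v l` : the list of darts `l` is a walk from `u` to `v`. -/
def IsWalk : G.V → G.V → List (G.E × Bool) → Prop
  | u, v, [] => u = v
  | u, v, d :: l => G.dstart d = u ∧ IsWalk (G.dend d) v l

/-- The length of a walk. -/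
def walkLen (l : List (G.E × Bool)) : ℝ := (l.map fun d => G.len d.1).sum

/-- The real cycle vector of a closed walk: its class in `H₁(Γ, ℝ) ⊆ ℝ^E`, recording
the signed number of times each edge is traversed. A family of loops is homologically
independent iff their cycle vectors are linearly independent. -/
def cycVec (l : List (G.E × Bool)) : G.E → ℝ := fun e =>
  (l.map fun d => if d.1 = e then (if d.2 then (1 : ℝ) else -1) else 0).sum

/-- The graph is connected. -/
def Connected : Prop := ∀ u v : G.V, ∃ l, G.IsWalk u v l

/-- `G.bettiEq b` : the first Betti number `e - v + 1` of the connected graph `G`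
equals `b`. -/
def bettiEq (b : ℕ) : Prop :=
  (Fintype.card G.E : ℤ) - (Fintype.card G.V : ℤ) + 1 = (b : ℤ)

/-- The path distance between two vertices. -/
noncomputable def vdist (u v : G.V) : ℝ :=
  sInf {x | ∃ l, G.IsWalk u v l ∧ G.walkLen l = x}

/-- The list of vertices visited by a walk. -/
def walkVerts (l : List (G.E × Bool)) : List G.V := l.map G.dstart

/-- The distance from a vertex to a (nonempty) walk. -/
noncomputable def distToWalk (x : G.V) (l : List (G.E × Bool)) : ℝ :=
  sInf {d | ∃ v ∈ G.walkVerts l, G.vdist x v = d}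

/-- The distance between two loops. -/
noncomputable def loopDist (l₁ l₂ : List (G.E × Bool)) : ℝ :=
  sInf {d | ∃ u ∈ G.walkVerts l₁, ∃ v ∈ G.walkVerts l₂, G.vdist u v = d}

/-- A simple loop (embedded circle): a nonempty closed walk repeating no edge and
no vertex. -/
def IsSimpleLoop (l : List (G.E × Bool)) : Prop :=
  l ≠ [] ∧ (∃ v, G.IsWalk v v l) ∧ (l.map Prod.fst).Nodup ∧ (G.walkVerts l).Nodup

end MGraph

namespace MGraph

variable {G : MGraph}

lemma isWalk_nil {u v : G.V} : G.IsWalk u v [] ↔ u = v := Iff.rfl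

lemma isWalk_cons {u v : G.V} {d : G.E × Bool} {l : List (G.E × Bool)} :
    G.IsWalk u v (d :: l) ↔ G.dstart d = u ∧ G.IsWalk (G.dend d) v l := Iff.rfl

lemma isWalk_append {u v w : G.V} {l1 l2 : List (G.E × Bool)}
    (h1 : G.IsWalk u v l1) (h2 : G.IsWalk v w l2) : G.IsWalk u w (l1 ++ l2) := by
  induction l1 generalizing u with
  | nil => rw [isWalk_nil] at h1; subst h1; simpa using h2
  | cons d l ih => exact ⟨h1.1, ih h1.2⟩

lemma isWalk_append' {u w : G.V} {l1 l2 : List (G.E × Bool)}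
    (h : G.IsWalk u w (l1 ++ l2)) : ∃ v, G.IsWalk u v l1 ∧ G.IsWalk v w l2 := by
  induction l1 generalizing u with
  | nil => exact ⟨u, rfl, h⟩
  | cons d l ih =>
    obtain ⟨v, h1, h2⟩ := ih h.2
    exact ⟨v, ⟨h.1, h1⟩, h2⟩

/-- The reversed walk. -/
def revW (G : MGraph) (l : List (G.E × Bool)) : List (G.E × Bool) :=
  (l.map fun d => (d.1, !d.2)).reverse

lemma dstart_flip (d : G.E × Bool) : G.dstart (d.1, !d.2) = G.dend d := by
  cases d with | mk e b => cases b <;> simp [dstart, dend]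

lemma dend_flip (d : G.E × Bool) : G.dend (d.1, !d.2) = G.dstart d := by
  cases d with | mk e b => cases b <;> simp [dstart, dend]

lemma isWalk_revW {u v : G.V} {l : List (G.E × Bool)} (h : G.IsWalk u v l) :
    G.IsWalk v u (G.revW l) := by
  induction l generalizing u with
  | nil => rw [isWalk_nil] at h; subst h; exact rfl
  | cons d l ih =>
    have hrev : G.revW (d :: l) = G.revW l ++ [(d.1, !d.2)] := by simp [revW]
    rw [hrev]
    refine isWalk_append (ih h.2) ⟨dstart_flip d, ?_⟩
    rw [isWalk_nil, dend_flip]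
    exact h.1

lemma walkLen_revW (l : List (G.E × Bool)) : G.walkLen (G.revW l) = G.walkLen l := by
  unfold revW walkLen
  rw [List.map_reverse, List.sum_reverse, List.map_map]
  rfl

lemma mem_revW {d : G.E × Bool} {l : List (G.E × Bool)} (h : d ∈ G.revW l) :
    ∃ d' ∈ l, d'.1 = d.1 := by
  simp only [revW, List.mem_reverse, List.mem_map] at h
  obtain ⟨d', hd', heq⟩ := h
  exact ⟨d', hd', by rw [← heq]⟩

lemma walkLen_nil : G.walkLen [] = 0 := rfl

lemma walkLen_cons (d : G.E × Bool) (l : List (G.E × Bool)) :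
    G.walkLen (d :: l) = G.len d.1 + G.walkLen l := by simp [walkLen]

lemma walkLen_append (l1 l2 : List (G.E × Bool)) :
    G.walkLen (l1 ++ l2) = G.walkLen l1 + G.walkLen l2 := by simp [walkLen]

lemma cycVec_append (l1 l2 : List (G.E × Bool)) (e : G.E) :
    G.cycVec (l1 ++ l2) e = G.cycVec l1 e + G.cycVec l2 e := by simp [cycVec]

lemma cycVec_cons (d : G.E × Bool) (l : List (G.E × Bool)) (e : G.E) :
    G.cycVec (d :: l) e
      = (if d.1 = e then (if d.2 then (1 : ℝ) else -1) else 0) + G.cycVec l e := by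
  simp [cycVec]

lemma cycVec_eq_zero {l : List (G.E × Bool)} {e : G.E} (h : ∀ d ∈ l, d.1 ≠ e) :
    G.cycVec l e = 0 := by
  refine List.sum_eq_zero ?_
  intro x hx
  simp only [List.mem_map] at hx
  obtain ⟨d, hd, rfl⟩ := hx
  simp [h d hd]

/-- Extract a trail (no repeated edges) from a walk, using only darts of the walk. -/
lemma exists_trail : ∀ (n : ℕ) (l : List (G.E × Bool)) (u v : G.V),
    l.length ≤ n → G.IsWalk u v l →
    ∃ l', G.IsWalk u v l' ∧ (l'.map Prod.fst).Nodup ∧ ∀ d ∈ l', d ∈ l := by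
  intro n
  induction n with
  | zero =>
    intro l u v hl h
    rw [List.length_eq_zero_iff.mp (Nat.le_zero.mp hl)] at h ⊢
    exact ⟨[], h, List.nodup_nil, by simp⟩
  | succ n ih =>
    intro l u v hl h
    match l with
    | [] => exact ⟨[], h, List.nodup_nil, by simp⟩
    | d :: rest =>
      by_cases hd : d.1 ∈ rest.map Prod.fst
      · simp only [List.mem_map] at hd
        obtain ⟨d', hd'rest, hd'1⟩ := hd
        obtain ⟨r1, r2, hsplit⟩ := List.append_of_mem hd'rest
        rw [hsplit] at h
        obtain ⟨w, hw1, hw2⟩ := isWalk_append' h.2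
        rw [isWalk_cons] at hw2
        by_cases hb : d'.2 = d.2
        · have hdd : d' = d := Prod.ext hd'1 hb
          subst hdd
          have hlen : (d' :: r2).length ≤ n := by
            simp only [List.length_cons, hsplit, List.length_append] at hl ⊢
            omega
          obtain ⟨l', h1, h2, h3⟩ := ih (d' :: r2) u v hlen ⟨h.1, hw2.2⟩
          refine ⟨l', h1, h2, fun x hx => ?_⟩
          rcases List.mem_cons.mp (h3 x hx) with hc | hc
          · exact hc ▸ List.mem_cons_self
          · exact List.mem_cons_of_mem _ (hsplit ▸ List.mem_append_right r1
              (List.mem_cons_of_mem _ hc))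
        · have hdd : d' = (d.1, !d.2) := by
            cases d with | mk e a => cases d' with | mk e' a' =>
            simp only at hd'1
            subst hd'1
            cases a <;> cases a' <;> simp_all
          have : G.IsWalk u v r2 := by
            have := hw2.2
            rw [hdd, dend_flip] at this
            rwa [h.1] at this
          have hlen : r2.length ≤ n := by
            simp only [List.length_cons, hsplit, List.length_append] at hl ⊢
            omega
          obtain ⟨l', h1, h2, h3⟩ := ih r2 u v hlen this
          refine ⟨l', h1, h2, fun x hx => List.mem_cons_of_mem _ ?_⟩
          exact hsplit ▸ List.mem_append_right r1 (List.mem_cons_of_mem _ (h3 x hx))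
      · obtain ⟨l', h1, h2, h3⟩ := ih rest (G.dend d) v (Nat.le_of_succ_le_succ hl) h.2
        refine ⟨d :: l', ⟨h.1, h1⟩, ?_, ?_⟩
        · refine List.Nodup.cons ?_ h2
          intro hmem
          simp only [List.mem_map] at hmem
          obtain ⟨d'', hd'', heq⟩ := hmem
          exact hd (List.mem_map.mpr ⟨d'', h3 d'' hd'', heq⟩)
        · intro x hx
          rcases List.mem_cons.mp hx with h | h
          · exact h ▸ List.mem_cons_self
          · exact List.mem_cons_of_mem _ (h3 x h)

/-- A walk from inside `R` to outside `R` crosses the boundary. -/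
lemma exists_crossing {R : Finset G.V} : ∀ {l : List (G.E × Bool)} {u v : G.V},
    G.IsWalk u v l → u ∈ R → v ∉ R →
    ∃ d ∈ l, G.dstart d ∈ R ∧ G.dend d ∉ R := by
  intro l
  induction l with
  | nil => intro u v h hu hv; exact absurd ((isWalk_nil.mp h) ▸ hu) hv
  | cons d l ih =>
    intro u v h hu hv
    by_cases hd : G.dend d ∈ R
    · obtain ⟨d', hd', hp⟩ := ih h.2 hd hv
      exact ⟨d', List.mem_cons_of_mem _ hd', hp⟩
    · exact ⟨d, List.mem_cons_self, h.1 ▸ hu, hd⟩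

/-- Grow a spanning connected edge set with at most `|V| - 1` edges. -/
lemma build_aux (hconn : G.Connected) (x : G.V) :
    ∀ (n : ℕ) (R : Finset G.V) (T : Finset G.E),
      Fintype.card G.V ≤ R.card + n → x ∈ R → T.card + 1 ≤ R.card →
      (∀ v ∈ R, ∃ l, G.IsWalk x v l ∧ ∀ d ∈ l, d.1 ∈ T) →
      ∃ T' : Finset G.E, T'.card + 1 ≤ Fintype.card G.V ∧
        ∀ v, ∃ l, G.IsWalk x v l ∧ ∀ d ∈ l, d.1 ∈ T' := by
  intro n
  induction n with
  | zero =>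
    intro R T hcard hx hT hreach
    have hR : R = Finset.univ := by
      apply Finset.eq_univ_of_card
      have := Finset.card_le_univ R
      omega
    subst hR
    exact ⟨T, by rwa [Finset.card_univ] at hT, fun v => hreach v (Finset.mem_univ v)⟩
  | succ n ih =>
    intro R T hcard hx hT hreach
    by_cases hRu : R = Finset.univ
    · subst hRu
      exact ⟨T, by rwa [Finset.card_univ] at hT, fun v => hreach v (Finset.mem_univ v)⟩
    · have hv : ∃ v, v ∉ R := by
        by_contra hc
        push_neg at hc
        exact hRu (Finset.eq_univ_of_forall hc)
      obtain ⟨v, hv⟩ := hv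
      obtain ⟨l, hl⟩ := hconn x v
      obtain ⟨d, _, hd1, hd2⟩ := exists_crossing hl hx hv
      obtain ⟨p, hp, hpT⟩ := hreach _ hd1
      refine ih (insert (G.dend d) R) (insert d.1 T) ?_ ?_ ?_ ?_
      · rw [Finset.card_insert_of_notMem hd2]; omega
      · exact Finset.mem_insert_of_mem hx
      · have h1 := Finset.card_insert_le d.1 T
        rw [Finset.card_insert_of_notMem hd2]
        omega
      · intro w hw
        rcases Finset.mem_insert.mp hw with hw | hw
        · refine ⟨p ++ [d], ?_, ?_⟩
          · subst hw
            exact isWalk_append hp ⟨rfl, rfl⟩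
          · intro d' hd'
            rcases List.mem_append.mp hd' with h | h
            · exact Finset.mem_insert_of_mem (hpT d' h)
            · rw [List.mem_singleton.mp h]
              exact Finset.mem_insert_self _ _
        · obtain ⟨q, hq, hqT⟩ := hreach w hw
          exact ⟨q, hq, fun d' hd' => Finset.mem_insert_of_mem (hqT d' hd')⟩

/-- Length bound for trails with edges in `T`. -/
lemma walkLen_le_sum : ∀ (l : List (G.E × Bool)) (T : Finset G.E),
    (l.map Prod.fst).Nodup → (∀ d ∈ l, d.1 ∈ T) →
    G.walkLen l ≤ ∑ e ∈ T, G.len e := by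
  intro l
  induction l with
  | nil =>
    intro T _ _
    rw [walkLen_nil]
    exact Finset.sum_nonneg fun e _ => G.len_nonneg e
  | cons d l ih =>
    intro T hnd hmem
    rw [walkLen_cons]
    have hd : d.1 ∈ T := hmem d (List.mem_cons_self)
    have hnotin : d.1 ∉ l.map Prod.fst := by
      simp only [List.map_cons, List.nodup_cons] at hnd
      exact hnd.1
    have hsub : ∀ d' ∈ l, d'.1 ∈ T.erase d.1 := by
      intro d' hd'
      refine Finset.mem_erase.mpr ⟨?_, hmem d' (List.mem_cons_of_mem _ hd')⟩
      intro hc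
      exact hnotin (List.mem_map.mpr ⟨d', hd', hc⟩)
    have := ih (T.erase d.1) (by simpa [List.map_cons, List.nodup_cons] using hnd.of_cons) hsub
    have herase := Finset.add_sum_erase T G.len hd
    linarith

end MGraph

/-- Let `Γ` be a connected metric graph of first Betti number `b ≥ 2`
and total length `b`. Then there exist `b` homologically independent loops in `Γ`
all based at the same point, each of length at most `2b`. -/
theorem betti_loops_based_at_same_point (G : MGraph) (b : ℕ) (hb : 2 ≤ b)
    (hconn : G.Connected) (hbetti : G.bettiEq b) (hlen : G.totalLength = b) :
    ∃ (x : G.V) (c : Fin b → List (G.E × Bool)),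
      (∀ i, G.IsWalk x x (c i)) ∧
      (∀ i, G.walkLen (c i) ≤ 2 * b) ∧
      LinearIndependent ℝ (fun i => G.cycVec (c i)) := by
  classical
  have hVne : Nonempty G.V := by
    by_contra h
    rw [not_nonempty_iff] at h
    have hE : IsEmpty G.E := ⟨fun e => h.false (G.s e)⟩
    unfold MGraph.bettiEq at hbetti
    rw [Fintype.card_eq_zero, Fintype.card_eq_zero] at hbetti
    omega
  obtain ⟨x⟩ := hVne
  obtain ⟨T, hTcard, hreach⟩ := MGraph.build_aux hconn x (Fintype.card G.V) {x} ∅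
    (by simp) (Finset.mem_singleton_self x) (by simp)
    (by
      intro v hv
      rw [Finset.mem_singleton] at hv
      exact ⟨[], hv.symm, by simp⟩)
  have hTE : T.card ≤ Fintype.card G.E := Finset.card_le_univ T
  have hcompl : Tᶜ.card = Fintype.card G.E - T.card := Finset.card_compl T
  have hbT : b ≤ Tᶜ.card := by
    unfold MGraph.bettiEq at hbetti
    omega
  obtain ⟨S, hST, hScard⟩ := Finset.exists_subset_card_eq hbT
  let eqv : S ≃ Fin b := S.equivFinOfCardEq hScard
  set f : Fin b → G.E := fun i => ((eqv.symm i : S) : G.E) with hf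
  have hfinj : Function.Injective f := fun i j hij =>
    eqv.symm.injective (Subtype.ext hij)
  have hfT : ∀ i, f i ∉ T := fun i => Finset.mem_compl.mp (hST (eqv.symm i).2)
  have hloop : ∀ i : Fin b, ∃ c, G.IsWalk x x c ∧ G.walkLen c ≤ 2 * b ∧
      G.cycVec c (f i) = 1 ∧ ∀ j, j ≠ i → G.cycVec c (f j) = 0 := by
    intro i
    obtain ⟨l1, hl1, hl1T⟩ := hreach (G.s (f i))
    obtain ⟨p1, hp1, hp1nd, hp1sub⟩ :=
      MGraph.exists_trail l1.length l1 x (G.s (f i)) le_rfl hl1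
    obtain ⟨l2, hl2, hl2T⟩ := hreach (G.t (f i))
    obtain ⟨p2, hp2, hp2nd, hp2sub⟩ :=
      MGraph.exists_trail l2.length l2 x (G.t (f i)) le_rfl hl2
    have hp1T : ∀ d ∈ p1, d.1 ∈ T := fun d hd => hl1T d (hp1sub d hd)
    have hp2T : ∀ d ∈ p2, d.1 ∈ T := fun d hd => hl2T d (hp2sub d hd)
    refine ⟨p1 ++ (f i, true) :: G.revW p2, ?_, ?_, ?_, ?_⟩
    · refine MGraph.isWalk_append hp1 ⟨by simp [MGraph.dstart], ?_⟩
      have := MGraph.isWalk_revW hp2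
      simpa [MGraph.dend] using this
    · rw [MGraph.walkLen_append, MGraph.walkLen_cons, MGraph.walkLen_revW]
      have h1 := MGraph.walkLen_le_sum p1 T hp1nd hp1T
      have h2 := MGraph.walkLen_le_sum p2 T hp2nd hp2T
      have hsumT : ∑ e ∈ T, G.len e ≤ G.totalLength :=
        Finset.sum_le_sum_of_subset_of_nonneg (Finset.subset_univ T)
          (fun e _ _ => G.len_nonneg e)
      have hins : G.len (f i) + ∑ e ∈ T, G.len e ≤ G.totalLength := by
        rw [← Finset.sum_insert (hfT i)]
        exact Finset.sum_le_sum_of_subset_of_nonneg (Finset.subset_univ _)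
          (fun e _ _ => G.len_nonneg e)
      rw [hlen] at hsumT hins
      linarith
    · rw [MGraph.cycVec_append, MGraph.cycVec_cons]
      have z1 : G.cycVec p1 (f i) = 0 :=
        MGraph.cycVec_eq_zero (fun d hd hc => hfT i (hc ▸ hp1T d hd))
      have z2 : G.cycVec (G.revW p2) (f i) = 0 := by
        refine MGraph.cycVec_eq_zero ?_
        intro d hd hc
        obtain ⟨d', hd', he⟩ := MGraph.mem_revW hd
        exact hfT i ((he.trans hc) ▸ hp2T d' hd')
      simp [z1, z2]
    · intro j hj
      rw [MGraph.cycVec_append, MGraph.cycVec_cons]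
      have z1 : G.cycVec p1 (f j) = 0 :=
        MGraph.cycVec_eq_zero (fun d hd hc => hfT j (hc ▸ hp1T d hd))
      have z2 : G.cycVec (G.revW p2) (f j) = 0 := by
        refine MGraph.cycVec_eq_zero ?_
        intro d hd hc
        obtain ⟨d', hd', he⟩ := MGraph.mem_revW hd
        exact hfT j ((he.trans hc) ▸ hp2T d' hd')
      have hne : f i ≠ f j := fun hc => hj (hfinj hc).symm
      simp [z1, z2, hne]
  choose c hcw hclen hone hzero using hloop
  refine ⟨x, c, hcw, hclen, ?_⟩
  rw [Fintype.linearIndependent_iff]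
  intro g hg j
  have hpt : ∑ i, g i * G.cycVec (c i) (f j) = 0 := by
    simpa [Finset.sum_apply, Pi.smul_apply, smul_eq_mul] using congrFun hg (f j)
  rw [Fintype.sum_eq_single j (fun i hij => by
    rw [hzero i j (Ne.symm hij), mul_zero])] at hpt
  rw [hone j, mul_one] at hpt
  exact hpt
end

section
/- For integers b ≥ 2, 1 ≤ n ≤ b, and any λ > 0, there exists a connected metric graph Γ of first Betti number b and total length b such that any family of pairwise homologically independent loops in Γ based at a common point, each of length at most λ(log(b) + n), has cardinality at most ⌊λ(log(b) + n)⌋ + 1. -/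
namespace MGraphAux

open MGraph

variable (G : MGraph)

lemma isWalk_append (l₁ : List (G.E × Bool)) :
    ∀ {u v w : G.V} (l₂ : List (G.E × Bool)), G.IsWalk u v l₁ → G.IsWalk v w l₂ →
      G.IsWalk u w (l₁ ++ l₂) := by
  induction l₁ with
  | nil => intro u v w l₂ h₁ h₂; exact (show u = v from h₁) ▸ h₂
  | cons d t ih => intro u v w l₂ h₁ h₂; exact ⟨h₁.1, ih l₂ h₁.2 h₂⟩

lemma isWalk_reverse (l : List (G.E × Bool)) :
    ∀ {u v : G.V}, G.IsWalk u v l → ∃ l', G.IsWalk v u l' := by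
  induction l with
  | nil => intro u v h; exact ⟨[], (show u = v from h).symm⟩
  | cons d t ih =>
    intro u v h
    obtain ⟨l', hl'⟩ := ih h.2
    refine ⟨l' ++ [(d.1, !d.2)], isWalk_append G l' [(d.1, !d.2)] hl' ?_⟩
    refine ⟨?_, ?_⟩
    · cases hb : d.2 <;> simp [MGraph.dstart, MGraph.dend, hb]
    · show G.dend (d.1, !d.2) = u
      rw [← h.1]
      cases hb : d.2 <;> simp [MGraph.dstart, MGraph.dend, hb]

lemma walkLen_nil : G.walkLen [] = 0 := rfl

lemma walkLen_cons (d : G.E × Bool) (l : List (G.E × Bool)) :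
    G.walkLen (d :: l) = G.len d.1 + G.walkLen l := by simp [MGraph.walkLen]

lemma walkLen_ge (φ : G.V → ℝ) (h : ∀ e, |φ (G.s e) - φ (G.t e)| ≤ G.len e)
    (l : List (G.E × Bool)) :
    ∀ {u v : G.V}, G.IsWalk u v l → φ v - φ u ≤ G.walkLen l := by
  induction l with
  | nil => intro u v h1; rw [show u = v from h1]; simp [MGraph.walkLen]
  | cons d t ih =>
    intro u v hw
    have h2 := ih hw.2
    have h3 : φ (G.dend d) - φ (G.dstart d) ≤ G.len d.1 := by
      have h5 := abs_le.mp (h d.1)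
      cases hb : d.2 <;> simp [MGraph.dstart, MGraph.dend, hb] <;> linarith [h5.1, h5.2]
    rw [walkLen_cons]
    rw [← hw.1]
    linarith

lemma abs_le_walkLen (φ : G.V → ℝ) (h : ∀ e, |φ (G.s e) - φ (G.t e)| ≤ G.len e)
    (l : List (G.E × Bool)) {u v : G.V} (hw : G.IsWalk u v l) :
    |φ v - φ u| ≤ G.walkLen l := by
  rw [abs_le]
  constructor
  · have := walkLen_ge G (fun x => -φ x)
      (by intro e
          show |-φ (G.s e) - -φ (G.t e)| ≤ G.len e
          rw [show -φ (G.s e) - -φ (G.t e) = -(φ (G.s e) - φ (G.t e)) by ring, abs_neg]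
          exact h e) l hw
    simp at this; linarith
  · exact walkLen_ge G φ h l hw

lemma walk_split (l : List (G.E × Bool)) :
    ∀ {u v : G.V} (d : G.E × Bool), G.IsWalk u v l → d ∈ l →
      ∃ l₁ l₂, G.IsWalk u (G.dstart d) l₁ ∧ G.IsWalk (G.dend d) v l₂ ∧
        G.walkLen l = G.walkLen l₁ + G.len d.1 + G.walkLen l₂ := by
  induction l with
  | nil => intro u v d _ hm; simp at hm
  | cons a t ih =>
    intro u v d hw hm
    rcases List.mem_cons.mp hm with rfl | hm
    · exact ⟨[], t, hw.1.symm, hw.2, by simp [walkLen_cons, walkLen_nil]⟩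
    · obtain ⟨l₁, l₂, h1, h2, h3⟩ := ih d hw.2 hm
      exact ⟨a :: l₁, l₂, ⟨hw.1, h1⟩, h2, by rw [walkLen_cons, walkLen_cons, h3]; ring⟩

lemma cycVec_eq_zero (l : List (G.E × Bool)) (e : G.E) (h : ∀ d ∈ l, d.1 ≠ e) :
    G.cycVec l e = 0 := by
  refine List.sum_eq_zero ?_
  intro x hx
  rcases List.mem_map.mp hx with ⟨d, hd, rfl⟩
  simp [h d hd]

lemma flux (χ : G.V → ℝ) (l : List (G.E × Bool)) :
    ∀ {u v : G.V}, G.IsWalk u v l →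
      ((l.map fun d => χ (G.dend d) - χ (G.dstart d)).sum) = χ v - χ u := by
  induction l with
  | nil => intro u v h; rw [show u = v from h]; simp
  | cons d t ih =>
    intro u v hw
    have := ih hw.2
    simp only [List.map_cons, List.sum_cons, this, ← hw.1]
    ring

end MGraphAux

namespace MGraphAux

/-- The caterpillar graph: `b` vertices in a path with unit edges, and a circle
of length `1/b` at each vertex. -/
noncomputable def cat (b : ℕ) : MGraph where
  V := Fin b
  E := Fin b ⊕ Fin (b - 1)
  fV := inferInstance
  fE := inferInstance
  deV := inferInstance
  deE := inferInstance
  s := Sum.elim (fun i => i) (fun j => ⟨j.1, by have := j.2; omega⟩)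
  t := Sum.elim (fun i => i) (fun j => ⟨j.1 + 1, by have := j.2; omega⟩)
  len := Sum.elim (fun _ => (b : ℝ)⁻¹) (fun _ => 1)
  len_nonneg := by rintro (i | j) <;> simp <;> positivity

lemma cat_connected (b : ℕ) : (cat b).Connected := by
  have key : ∀ (i : ℕ) (h : i < b), ∃ l, (cat b).IsWalk ⟨0, by omega⟩ ⟨i, h⟩ l := by
    intro i
    induction i with
    | zero => intro h; exact ⟨[], rfl⟩
    | succ m ih =>
      intro h
      obtain ⟨l, hl⟩ := ih (by omega)
      have hm : m < b - 1 := by omega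
      refine ⟨l ++ ([(Sum.inr ⟨m, hm⟩, true)] : List ((cat b).E × Bool)),
        isWalk_append (cat b) l _ hl ?_⟩
      exact ⟨rfl, rfl⟩
  intro u v
  obtain ⟨l₁, h₁⟩ := key u.1 u.2
  obtain ⟨l₂, h₂⟩ := key v.1 v.2
  obtain ⟨l₁', h₁'⟩ := isWalk_reverse _ l₁ h₁
  exact ⟨l₁' ++ l₂, isWalk_append _ _ _ h₁' h₂⟩

lemma cat_betti (b : ℕ) (hb : 2 ≤ b) : (cat b).bettiEq b := by
  show (Fintype.card (Fin b ⊕ Fin (b - 1)) : ℤ) - (Fintype.card (Fin b) : ℤ) + 1 = (b : ℤ)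
  simp [Fintype.card_sum]
  omega

lemma cat_length (b : ℕ) (hb : 2 ≤ b) : (cat b).totalLength = b := by
  show ∑ e : Fin b ⊕ Fin (b - 1), Sum.elim (fun _ => (b : ℝ)⁻¹) (fun _ => (1:ℝ)) e = b
  rw [Fintype.sum_sum_type]
  simp [Finset.card_univ]
  rw [mul_inv_cancel₀ (by positivity : (b:ℝ) ≠ 0)]
  have : ((b - 1 : ℕ) : ℝ) = (b : ℝ) - 1 := by
    have : (1:ℕ) ≤ b := by omega
    push_cast [Nat.cast_sub this]
    ring
  rw [this]; ring

end MGraphAux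

namespace MGraphAux

lemma cat_cycVec_path (b : ℕ) (x : (cat b).V) (l : List ((cat b).E × Bool))
    (hw : (cat b).IsWalk x x l) (j : Fin (b - 1)) :
    (cat b).cycVec l (Sum.inr j) = 0 := by
  let χ : (cat b).V → ℝ := fun v => if v.1 ≤ j.1 then 0 else 1
  have hfun : ∀ d : (cat b).E × Bool,
      (@ite _ (d.1 = Sum.inr j) ((cat b).deE d.1 (Sum.inr j)) (if d.2 then (1:ℝ) else -1) 0)
        = χ ((cat b).dend d) - χ ((cat b).dstart d) := by
    rintro ⟨t | j', bo⟩
    · refine (if_neg (by simp : ¬ (Sum.inl t : (cat b).E) = Sum.inr j)).trans ?_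
      cases bo <;> exact (sub_self (χ t)).symm
    · by_cases hjj : j' = j
      · subst hjj
        rw [if_pos rfl]
        cases bo
        · show (-1 : ℝ) = (if j'.1 ≤ j'.1 then (0:ℝ) else 1) - (if j'.1 + 1 ≤ j'.1 then (0:ℝ) else 1)
          simp
        · show (1 : ℝ) = (if j'.1 + 1 ≤ j'.1 then (0:ℝ) else 1) - (if j'.1 ≤ j'.1 then (0:ℝ) else 1)
          simp
      · refine (if_neg (by simp [hjj] : ¬ (Sum.inr j' : (cat b).E) = Sum.inr j)).trans ?_
        have hne : j'.1 ≠ j.1 := fun h => hjj (Fin.ext h)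
        have hiff : (j'.1 ≤ j.1) ↔ (j'.1 + 1 ≤ j.1) := by omega
        cases bo
        · show (0 : ℝ) = (if j'.1 ≤ j.1 then (0:ℝ) else 1) - (if j'.1 + 1 ≤ j.1 then (0:ℝ) else 1)
          by_cases h : j'.1 ≤ j.1
          · rw [if_pos h, if_pos (hiff.mp h)]; ring
          · rw [if_neg h, if_neg (fun hc => h (hiff.mpr hc))]; ring
        · show (0 : ℝ) = (if j'.1 + 1 ≤ j.1 then (0:ℝ) else 1) - (if j'.1 ≤ j.1 then (0:ℝ) else 1)
          by_cases h : j'.1 ≤ j.1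
          · rw [if_pos h, if_pos (hiff.mp h)]; ring
          · rw [if_neg h, if_neg (fun hc => h (hiff.mpr hc))]; ring
  have key : (cat b).cycVec l (Sum.inr j)
      = ((l.map fun d => χ ((cat b).dend d) - χ ((cat b).dstart d))).sum := by
    show ((l.map _)).sum = _
    congr 1
    exact List.map_congr_left (fun d _ => hfun d)
  rw [key, flux (cat b) χ l hw]
  ring

end MGraphAux


open MGraphAux

/-- For integers `b ≥ 2`, `1 ≤ n ≤ b` and any `λ > 0`, there exists a
connected metric graph `Γ` of first Betti number `b` and total length `b` such that
any family of homologically independent loops in `Γ` based at a common point, each of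
length at most `λ(log b + n)`, has cardinality at most `⌊λ(log b + n)⌋ + 1`. -/
theorem optimality_graph_exists (b n : ℕ) (hb : 2 ≤ b) (hn1 : 1 ≤ n) (hnb : n ≤ b)
    (lam : ℝ) (hlam : 0 < lam) :
    ∃ G : MGraph, G.Connected ∧ G.bettiEq b ∧ G.totalLength = b ∧
      ∀ (k : ℕ) (x : G.V) (c : Fin k → List (G.E × Bool)),
        (∀ i, G.IsWalk x x (c i)) →
        (∀ i, G.walkLen (c i) ≤ lam * (Real.log b + n)) →
        LinearIndependent ℝ (fun i => G.cycVec (c i)) →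
        k ≤ ⌊lam * (Real.log b + n)⌋₊ + 1 := by
  classical
  have hL : 0 < lam * (Real.log b + n) := by
    apply mul_pos hlam
    have h1 : 0 < Real.log b := Real.log_pos (by exact_mod_cast hb.trans_lt' one_lt_two)
    have h2 : (0:ℝ) < n := by exact_mod_cast hn1
    linarith
  set L := lam * (Real.log b + n) with hLdef
  refine ⟨cat b, cat_connected b, cat_betti b hb, cat_length b hb, ?_⟩
  intro k x c hwalk hlen hind
  -- the potential function
  have hφ : ∀ e, |(((cat b).s e).1 : ℝ) - (((cat b).t e).1 : ℝ)| ≤ (cat b).len e := by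
    rintro (i | j)
    · show |(i.1:ℝ) - (i.1:ℝ)| ≤ (b:ℝ)⁻¹
      simp
    · show |(j.1:ℝ) - ((j.1+1 : ℕ):ℝ)| ≤ 1
      push_cast
      rw [show (j.1:ℝ) - ((j.1:ℝ)+1) = -1 by ring]
      norm_num
  -- support of the cycle vectors
  have hsupp : ∀ (i : Fin k) (e : (cat b).E), (cat b).cycVec (c i) e ≠ 0 →
      ∃ t : Fin b, 2 * |(x.1:ℝ) - (t.1:ℝ)| ≤ L ∧ e = Sum.inl t := by
    intro i e hne
    have hd : ∃ d ∈ c i, d.1 = e := by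
      by_contra hcon
      push_neg at hcon
      exact hne (cycVec_eq_zero _ _ _ hcon)
    match e with
    | Sum.inr j => exact absurd (cat_cycVec_path b x (c i) (hwalk i) j) hne
    | Sum.inl t =>
      refine ⟨t, ?_, rfl⟩
      obtain ⟨d, hdmem, hd1⟩ := hd
      obtain ⟨l₁, l₂, h1, h2, h3⟩ := walk_split (cat b) (c i) d (hwalk i) hdmem
      have e1 : (cat b).dstart d = t := by
        cases hb2 : d.2 <;> simp [MGraph.dstart, hb2, hd1, cat]
      have e2 : (cat b).dend d = t := by
        cases hb2 : d.2 <;> simp [MGraph.dend, hb2, hd1, cat]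
      have A := abs_le_walkLen (cat b) (fun v => (v.1:ℝ)) hφ l₁ h1
      have B := abs_le_walkLen (cat b) (fun v => (v.1:ℝ)) hφ l₂ h2
      rw [e1] at A
      rw [e2] at B
      beta_reduce at A B
      have hlend : 0 ≤ (cat b).len d.1 := (cat b).len_nonneg d.1
      have hLL := hlen i
      have j1 := abs_le.mp A
      have j2 := abs_le.mp B
      rcases abs_cases ((x.1:ℝ) - (t.1:ℝ)) with ⟨hab, _⟩ | ⟨hab, _⟩ <;> rw [hab] <;>
        linarith [j1.1, j1.2, j2.1, j2.2]
  -- cardinality bound for sets of close-by circles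
  have hcard : ∀ (S : Finset (Fin b)), (∀ t ∈ S, 2 * |(x.1:ℝ) - (t.1:ℝ)| ≤ L) →
      S.card ≤ ⌊L⌋₊ + 1 := by
    intro S hmem
    rcases S.eq_empty_or_nonempty with hS | hS
    · simp [hS]
    · have haS := hmem _ (S.min'_mem hS)
      have hcr : S.card ≤ (Finset.range (⌊L⌋₊ + 1)).card := by
        apply Finset.card_le_card_of_injOn (fun t => t.1 - (S.min' hS).1)
        · intro t ht
          have hta : (S.min' hS).1 ≤ t.1 := S.min'_le t ht
          have htx := hmem t ht
          simp only [Finset.mem_range]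
          have j1 := abs_le.mp (by linarith : |(x.1:ℝ) - (t.1:ℝ)| ≤ L/2)
          have j2 := abs_le.mp (by linarith : |(x.1:ℝ) - ((S.min' hS).1:ℝ)| ≤ L/2)
          have h2 : ((t.1 - (S.min' hS).1 : ℕ) : ℝ) ≤ L := by
            rw [Nat.cast_sub hta]
            push_cast
            linarith [j1.1, j1.2, j2.1, j2.2]
          have := Nat.le_floor h2
          exact Finset.mem_coe.mpr (Finset.mem_range.mpr (Nat.lt_succ_of_le this))
        · intro t1 h1 t2 h2 heq
          have ha1 : (S.min' hS).1 ≤ t1.1 := S.min'_le t1 h1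
          have ha2 : (S.min' hS).1 ≤ t2.1 := S.min'_le t2 h2
          simp only at heq
          exact Fin.ext (by omega)
      simpa using hcr
  -- linear independence bound
  classical
  set S₀ : Finset (Fin b) := Finset.univ.filter (fun t => 2 * |(x.1:ℝ) - (t.1:ℝ)| ≤ L)
    with hS₀def
  set T : Finset (cat b).E := S₀.image Sum.inl with hTdef
  set π : ((cat b).E → ℝ) →ₗ[ℝ] (↥T → ℝ) :=
    LinearMap.funLeft ℝ ℝ (fun e => (e : (cat b).E)) with hπdef
  have hind2 : LinearIndependent ℝ (fun i => π ((cat b).cycVec (c i))) := by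
    rw [Fintype.linearIndependent_iff]
    intro g hg
    have h0 : ∑ i, g i • (cat b).cycVec (c i) = 0 := by
      funext e
      by_cases he : e ∈ T
      · have := congrFun hg ⟨e, he⟩
        simpa [hπdef, LinearMap.funLeft, Finset.sum_apply] using this
      · have each : ∀ i, (cat b).cycVec (c i) e = 0 := by
          intro i
          by_contra hne
          obtain ⟨t, htS, rfl⟩ := hsupp i e hne
          exact he (Finset.mem_image_of_mem Sum.inl
            (Finset.mem_filter.mpr ⟨Finset.mem_univ t, htS⟩))
        simp [Finset.sum_apply, each]
    exact Fintype.linearIndependent_iff.mp hind g h0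
  have hle := hind2.fintype_card_le_finrank
  rw [Module.finrank_fintype_fun_eq_card, Fintype.card_coe, Fintype.card_fin] at hle
  have hTS : T.card = S₀.card := Finset.card_image_of_injective _ Sum.inl_injective
  have hS₀card : S₀.card ≤ ⌊L⌋₊ + 1 := by
    apply hcard
    intro t ht
    exact (Finset.mem_filter.mp ht).2
  omega
end
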